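/- For every ε > 0 there exists a constant C > 0 such that for all N ∈ ℕ and all A ⊆ [N] with distinct subset products, there exists A' ⊆ A with |A \ A'| ≤ C·N^{1/3+ε} such that the map a ↦ (v_p(a))_{p prime, N^{1/3} < p ≤ N} is injective on A', and every a ∈ A' is divisible by at least one prime p with N^{1/3} < p ≤ N. -/

import Mathlib

/-- A set of positive integers has *distinct subset products* if any two distinct
finite subsets have distinct products (the empty product is `1`). -/
def DistinctSubsetProds (A : Set ℕ) : Prop :=
  ∀ B C : Finset ℕ, ↑B ⊆ A → ↑C ⊆ A → ∏ b ∈ B, b = ∏ c ∈ C, c → B = C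

open Finset

open Classical in
noncomputable def vecN (N a : ℕ) : ℕ → ℕ := fun p =>
  if Nat.Prime p ∧ (N : ℝ) ^ ((1:ℝ)/3) < (p : ℝ) then a.factorization p else 0

open Classical in
noncomputable def smallP (N : ℕ) : Finset ℕ :=
  (Finset.range (N+1)).filter (fun p => Nat.Prime p ∧ (p : ℝ) ≤ (N : ℝ) ^ ((1:ℝ)/3))

open Classical in
lemma core (N : ℕ) (hN : 1 ≤ N) (A X : Finset ℕ) (hXA : X ⊆ A)
    (hA : ↑A ⊆ Set.Icc 1 N) (hD : DistinctSubsetProds ↑A) :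
    2 ^ X.card ≤
      (∏ v ∈ X.image (vecN N), ((X.filter (fun a => vecN N a = v)).card + 1)) *
        (X.card * (Nat.log 2 N + 1) + 1) ^ (smallP N).card := by
  classical
  have hmem : ∀ a ∈ A, 1 ≤ a ∧ a ≤ N := by
    intro a ha
    exact (hA ha : a ∈ Set.Icc 1 N)
  set E := X.card * (Nat.log 2 N + 1) with hE
  set I := X.image (vecN N) with hI
  let Ω := (I.pi (fun v => Finset.range ((X.filter (fun a => vecN N a = v)).card + 1))) ×ˢ
      ((smallP N).pi (fun _ => Finset.range (E+1)))
  let φ : Finset ℕ → ((∀ v ∈ I, ℕ) × (∀ p ∈ smallP N, ℕ)) := fun B =>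
    (fun v _ => (B.filter (fun a => vecN N a = v)).card,
     fun p _ => (∏ b ∈ B, b).factorization p)
  have hprodpos : ∀ B : Finset ℕ, B ⊆ X → 0 < ∏ b ∈ B, b := by
    intro B hB
    exact Finset.prod_pos (fun b hb => (hmem b (hXA (hB hb))).1)
  have hmaps : ∀ B ∈ X.powerset, φ B ∈ Ω := by
    intro B hB
    rw [mem_powerset] at hB
    rw [Finset.mem_product]
    constructor
    · rw [Finset.mem_pi]
      intro v hv
      rw [Finset.mem_range, Nat.lt_succ_iff]
      exact card_le_card (filter_subset_filter _ hB)
    · rw [Finset.mem_pi]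
      intro p hp
      rw [Finset.mem_range, Nat.lt_succ_iff]
      simp only [smallP, Finset.mem_filter] at hp
      obtain ⟨-, hpp, -⟩ := hp
      set n := ∏ b ∈ B, b with hn
      have hnpos : 0 < n := hprodpos B hB
      have hdvd : p ^ (n.factorization p) ∣ n := Nat.ordProj_dvd n p
      have h1 : p ^ (n.factorization p) ≤ n := Nat.le_of_dvd hnpos hdvd
      have h2 : 2 ^ (n.factorization p) ≤ p ^ (n.factorization p) :=
        Nat.pow_le_pow_left hpp.two_le _
      have h3 : n ≤ N ^ X.card := by
        calc n ≤ N ^ B.card := Finset.prod_le_pow_card _ _ _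
                  (fun b hb => (hmem b (hXA (hB hb))).2)
        _ ≤ N ^ X.card := Nat.pow_le_pow_right hN (card_le_card hB)
      have h4 : N ^ X.card ≤ 2 ^ E := by
        calc N ^ X.card ≤ (2 ^ (Nat.log 2 N + 1)) ^ X.card :=
              Nat.pow_le_pow_left (Nat.lt_pow_succ_log_self (by norm_num) N).le _
        _ = 2 ^ E := by rw [← pow_mul, hE, mul_comm]
      have : 2 ^ (n.factorization p) ≤ 2 ^ E :=
        h2.trans (h1.trans (h3.trans h4))
      exact (Nat.pow_le_pow_iff_right (by norm_num)).1 this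
  have hinj : Set.InjOn φ ↑(X.powerset) := by
    intro B hB C hC h
    simp only [Finset.mem_coe, mem_powerset] at hB hC
    have h1 := congrArg Prod.fst h
    have h2 := congrArg Prod.snd h
    simp only [φ] at h1 h2
    have hkey : ∀ D : Finset ℕ, D ⊆ X → ∀ p : ℕ, Nat.Prime p →
        (N : ℝ) ^ ((1:ℝ)/3) < (p : ℝ) →
        (∏ b ∈ D, b).factorization p =
          ∑ v ∈ I, (D.filter (fun a => vecN N a = v)).card * v p := by
      intro D hD p hp hlt
      have hne : ∀ b ∈ D, b ≠ 0 := fun b hb => (Nat.one_le_iff_ne_zero.1 (hmem b (hXA (hD hb))).1)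
      rw [Nat.factorization_prod hne, Finsupp.finset_sum_apply]
      have step1 : ∀ b ∈ D, b.factorization p = (fun v : ℕ → ℕ => v p) (vecN N b) := by
        intro b hb
        simp only [vecN]
        rw [if_pos (show Nat.Prime p ∧ (N : ℝ) ^ ((1:ℝ)/3) < (p : ℝ) from ⟨hp, hlt⟩)]
      rw [Finset.sum_congr rfl step1, Finset.sum_comp (fun v : ℕ → ℕ => v p) (vecN N)]
      rw [Finset.sum_subset (Finset.image_subset_image hD)]
      · simp only [smul_eq_mul, hI]
      · intro v _ hnv
        have hemp : D.filter (fun a => vecN N a = v) = ∅ := by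
          rw [Finset.filter_eq_empty_iff]
          intro a ha hva
          exact hnv (hva ▸ Finset.mem_image_of_mem _ ha)
        simp [hemp]
    have hfac : (∏ b ∈ B, b).factorization = (∏ c ∈ C, c).factorization := by
      ext p
      by_cases hp : Nat.Prime p
      · by_cases hlt : (N : ℝ) ^ ((1:ℝ)/3) < (p : ℝ)
        · rw [hkey B hB p hp hlt, hkey C hC p hp hlt]
          refine Finset.sum_congr rfl (fun v hv => ?_)
          rw [congrFun (congrFun h1 v) hv]
        · push_neg at hlt
          have hpN : p ≤ N := by
            have h13 : (N : ℝ) ^ ((1:ℝ)/3) ≤ (N : ℝ) := by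
              calc (N : ℝ) ^ ((1:ℝ)/3) ≤ (N : ℝ) ^ (1:ℝ) :=
                    Real.rpow_le_rpow_of_exponent_le (by exact_mod_cast hN) (by norm_num)
              _ = N := Real.rpow_one _
            exact_mod_cast hlt.trans h13
          have hmemp : p ∈ smallP N := by
            simp only [smallP, Finset.mem_filter, Finset.mem_range]
            exact ⟨Nat.lt_succ_of_le hpN, hp, hlt⟩
          exact congrFun (congrFun h2 p) hmemp
      · rw [Nat.factorization_eq_zero_of_not_prime _ hp,
            Nat.factorization_eq_zero_of_not_prime _ hp]
    have hprod : ∏ b ∈ B, b = ∏ c ∈ C, c :=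
      Nat.factorization_inj (Set.mem_setOf.2 (hprodpos B hB).ne')
        (Set.mem_setOf.2 (hprodpos C hC).ne') hfac
    exact hD B C (fun x hx => Finset.mem_coe.2 (hXA (hB (Finset.mem_coe.1 hx))))
      (fun x hx => Finset.mem_coe.2 (hXA (hC (Finset.mem_coe.1 hx)))) hprod
  have hcard := Finset.card_le_card_of_injOn φ hmaps hinj
  rw [Finset.card_powerset] at hcard
  rw [Finset.card_product, Finset.card_pi, Finset.card_pi] at hcard
  simpa using hcard

lemma cardA_le {N : ℕ} {A : Finset ℕ} (hA : ↑A ⊆ Set.Icc 1 N) : A.card ≤ N := by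
  have h1 : A ⊆ Finset.Icc 1 N := by
    intro a ha
    have := hA (Finset.mem_coe.2 ha)
    exact Finset.mem_Icc.2 this
  calc A.card ≤ (Finset.Icc 1 N).card := Finset.card_le_card h1
  _ = N := by rw [Nat.card_Icc]; omega

lemma baseBound {N x : ℕ} (hx : x ≤ N) : x * (Nat.log 2 N + 1) + 1 ≤ (N+1)^2 := by
  have hL : Nat.log 2 N ≤ N := Nat.log_le_self 2 N
  have h1 : x * (Nat.log 2 N + 1) ≤ N * (N + 1) :=
    Nat.mul_le_mul hx (by omega)
  have h2 : (N+1)^2 = N*(N+1) + N + 1 := by ring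
  omega

open Classical in
lemma smoothBound (N : ℕ) (hN : 1 ≤ N) (A : Finset ℕ) (hA : ↑A ⊆ Set.Icc 1 N)
    (hD : DistinctSubsetProds ↑A) :
    2 ^ (A.filter (fun a => vecN N a = 0)).card ≤ (N+1) ^ (10 * ((smallP N).card + 1)) := by
  classical
  set X := A.filter (fun a => vecN N a = 0) with hX
  have hXA : X ⊆ A := filter_subset _ _
  have hc := core N hN A X hXA hA hD
  set L := Nat.log 2 N with hL
  have hprod : (∏ v ∈ X.image (vecN N), ((X.filter (fun a => vecN N a = v)).card + 1)) ≤
      X.card + 1 := by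
    have himg : X.image (vecN N) ⊆ {0} := by
      intro v hv
      obtain ⟨a, ha, rfl⟩ := mem_image.1 hv
      exact mem_singleton.2 ((mem_filter.1 ha).2)
    rcases Finset.subset_singleton_iff.1 himg with h | h <;> rw [h]
    · simp
    · rw [Finset.prod_singleton]
      exact Nat.add_le_add_right (card_le_card (filter_subset _ _)) 1
  have hE1 : X.card + 1 ≤ X.card * (L + 1) + 1 := by
    have := Nat.le_mul_of_pos_right X.card (show 0 < L + 1 by omega); omega
  have h2 : 2 ^ X.card ≤ (X.card * (L + 1) + 1) ^ ((smallP N).card + 1) := by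
    calc 2 ^ X.card ≤ (X.card + 1) * (X.card * (L + 1) + 1) ^ (smallP N).card :=
          le_trans hc (Nat.mul_le_mul_right _ hprod)
    _ ≤ (X.card * (L + 1) + 1) * (X.card * (L + 1) + 1) ^ (smallP N).card :=
          Nat.mul_le_mul_right _ hE1
    _ = (X.card * (L + 1) + 1) ^ ((smallP N).card + 1) := (pow_succ' _ _).symm
  have hbase : X.card * (L + 1) + 1 ≤ (N+1)^2 :=
    baseBound ((cardA_le hA).trans' (card_le_card hXA))
  calc 2 ^ X.card ≤ ((N+1)^2) ^ ((smallP N).card + 1) :=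
        h2.trans (Nat.pow_le_pow_left hbase _)
  _ = (N+1) ^ (2 * ((smallP N).card + 1)) := by rw [← pow_mul]
  _ ≤ (N+1) ^ (10 * ((smallP N).card + 1)) :=
        Nat.pow_le_pow_right (by omega) (by omega)

lemma pow5 (m : ℕ) (hm : 2 ≤ m) : (m+1)^5 ≤ 16^m := by
  induction m, hm using Nat.le_induction with
  | base => norm_num
  | succ n hn ih =>
    have h34 : 3*(n+1+1) ≤ 4*(n+1) := by omega
    have h5 := Nat.pow_le_pow_left h34 5
    have hA : 243*(n+1+1)^5 ≤ 1024*(n+1)^5 := by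
      calc 243*(n+1+1)^5 = (3*(n+1+1))^5 := by ring
      _ ≤ (4*(n+1))^5 := h5
      _ = 1024*(n+1)^5 := by ring
    have hB : 243 * (n+1+1)^5 ≤ 243 * (16 * (n+1)^5) := by
      have : 243 * (16 * (n+1)^5) = 3888 * (n+1)^5 := by ring
      rw [this]
      exact hA.trans (Nat.mul_le_mul_right _ (by norm_num))
    have h' : (n+1+1)^5 ≤ 16*(n+1)^5 := Nat.le_of_mul_le_mul_left hB (by norm_num)
    calc (n+1+1)^5 ≤ 16*(n+1)^5 := h'
    _ ≤ 16*16^n := Nat.mul_le_mul_left 16 ih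
    _ = 16^(n+1) := by ring

open Classical in
lemma dupBound (N : ℕ) (hN : 1 ≤ N) (A : Finset ℕ) (hA : ↑A ⊆ Set.Icc 1 N)
    (hD : DistinctSubsetProds ↑A) :
    2 ^ (A.filter (fun a => 2 ≤ (A.filter (fun b => vecN N b = vecN N a)).card)).card ≤
      (N+1) ^ (10 * ((smallP N).card + 1)) := by
  classical
  set X := A.filter (fun a => 2 ≤ (A.filter (fun b => vecN N b = vecN N a)).card) with hX
  have hXA : X ⊆ A := filter_subset _ _
  have hc := core N hN A X hXA hA hD
  set L := Nat.log 2 N with hL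
  set T := X.card with hT
  set P := ∏ v ∈ X.image (vecN N), ((X.filter (fun a => vecN N a = v)).card + 1) with hP
  set S := (T * (L + 1) + 1) ^ (smallP N).card with hS
  have hfib : ∀ v ∈ X.image (vecN N), 2 ≤ (X.filter (fun a => vecN N a = v)).card := by
    intro v hv
    obtain ⟨a0, ha0, rfl⟩ := mem_image.1 hv
    have h2 : 2 ≤ (A.filter (fun b => vecN N b = vecN N a0)).card := (mem_filter.1 ha0).2
    refine le_trans h2 (card_le_card ?_)
    intro b hb
    obtain ⟨hbA, hvb⟩ := mem_filter.1 hb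
    refine mem_filter.2 ⟨mem_filter.2 ⟨hbA, ?_⟩, hvb⟩
    rw [hvb]; exact h2
  have hsum : T = ∑ v ∈ X.image (vecN N), (X.filter (fun a => vecN N a = v)).card :=
    card_eq_sum_card_image _ _
  have hP5 : P^5 ≤ 2^(4*T) := by
    calc P^5 = ∏ v ∈ X.image (vecN N), ((X.filter (fun a => vecN N a = v)).card + 1)^5 := by
          rw [hP, ← prod_pow]
    _ ≤ ∏ v ∈ X.image (vecN N), 16^((X.filter (fun a => vecN N a = v)).card) :=
          Finset.prod_le_prod' (fun v hv => pow5 _ (hfib v hv))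
    _ = 16 ^ (∑ v ∈ X.image (vecN N), (X.filter (fun a => vecN N a = v)).card) := by
          rw [← Finset.prod_pow_eq_pow_sum]
    _ = 16 ^ T := by rw [← hsum]
    _ = 2^(4*T) := by rw [(by norm_num : (16:ℕ) = 2^4), ← pow_mul]
  have h5 : 2^(4*T) * 2^T ≤ 2^(4*T) * S^5 := by
    calc 2^(4*T) * 2^T = (2^T)^5 := by rw [← pow_mul, ← pow_add]; ring_nf
    _ ≤ (P * S)^5 := Nat.pow_le_pow_left hc 5
    _ = P^5 * S^5 := by ring
    _ ≤ 2^(4*T) * S^5 := Nat.mul_le_mul_right _ hP5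
  have h6 : 2^T ≤ S^5 := Nat.le_of_mul_le_mul_left h5 (Nat.pow_pos (by norm_num))
  have hbase : T * (L + 1) + 1 ≤ (N+1)^2 :=
    baseBound ((cardA_le hA).trans' (card_le_card hXA))
  calc 2^T ≤ S^5 := h6
  _ = (T * (L + 1) + 1) ^ ((smallP N).card * 5) := by rw [hS, ← pow_mul]
  _ ≤ ((N+1)^2) ^ ((smallP N).card * 5) := Nat.pow_le_pow_left hbase _
  _ = (N+1) ^ (2 * ((smallP N).card * 5)) := by rw [← pow_mul]
  _ ≤ (N+1) ^ (10 * ((smallP N).card + 1)) :=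
        Nat.pow_le_pow_right (by omega) (by omega)

open Classical in
lemma smallP_card (N : ℕ) : ((smallP N).card : ℝ) ≤ (N:ℝ)^((1:ℝ)/3) + 1 := by
  classical
  have hsub : smallP N ⊆ Finset.range (⌊(N:ℝ)^((1:ℝ)/3)⌋₊ + 1) := by
    intro p hp
    simp only [smallP, mem_filter, mem_range] at hp
    obtain ⟨-, -, hle⟩ := hp
    exact mem_range.2 (Nat.lt_succ_of_le (Nat.le_floor hle))
  have h1 : (smallP N).card ≤ ⌊(N:ℝ)^((1:ℝ)/3)⌋₊ + 1 :=
    (card_le_card hsub).trans_eq (card_range _)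
  have h2 : ((⌊(N:ℝ)^((1:ℝ)/3)⌋₊ : ℕ) : ℝ) ≤ (N:ℝ)^((1:ℝ)/3) :=
    Nat.floor_le (Real.rpow_nonneg (Nat.cast_nonneg N) _)
  have h1' : ((smallP N).card : ℝ) ≤ ((⌊(N:ℝ)^((1:ℝ)/3)⌋₊ : ℕ) : ℝ) + 1 := by exact_mod_cast h1
  linarith

lemma numeric {ε : ℝ} (hε : 0 < ε) (N x e : ℕ) (hN : 1 ≤ N)
    (he : (e:ℝ) ≤ (N:ℝ)^((1:ℝ)/3) + 1)
    (hx : 2^x ≤ (N+1)^(10*(e+1))) :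
    (x:ℝ) ≤ 30*(1+1/(ε*Real.log 2)) * (N:ℝ)^((1:ℝ)/3+ε) := by
  have hlog2 : (0:ℝ) < Real.log 2 := Real.log_pos (by norm_num)
  have hN1 : (1:ℝ) ≤ (N:ℝ) := by exact_mod_cast hN
  have hNpos : (0:ℝ) < N := by linarith
  have hxR : ((2:ℝ))^x ≤ ((N:ℝ)+1)^(10*(e+1)) := by exact_mod_cast hx
  have hkey : (x:ℝ) * Real.log 2 ≤ (10*((e:ℝ)+1)) * Real.log ((N:ℝ)+1) := by
    have h := Real.log_le_log (by positivity) hxR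
    rw [Real.log_pow, Real.log_pow] at h
    push_cast at h
    linarith
  have hr13 : (1:ℝ) ≤ (N:ℝ)^((1:ℝ)/3) := Real.one_le_rpow hN1 (by norm_num)
  have hre : (1:ℝ) ≤ (N:ℝ)^ε := Real.one_le_rpow hN1 hε.le
  have hlogN : Real.log N ≤ (N:ℝ)^ε/ε := Real.log_le_rpow_div (Nat.cast_nonneg N) hε
  have hlogN1 : Real.log ((N:ℝ)+1) ≤ Real.log 2 + (N:ℝ)^ε/ε := by
    have h2N : (N:ℝ)+1 ≤ 2*N := by linarith
    have : Real.log ((N:ℝ)+1) ≤ Real.log (2*N) := Real.log_le_log (by linarith) h2N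
    rw [Real.log_mul (by norm_num) (by linarith)] at this
    linarith
  have hlogN1pos : 0 ≤ Real.log ((N:ℝ)+1) := Real.log_nonneg (by linarith)
  have he3 : (0:ℝ) ≤ (e:ℝ) + 1 ∧ (e:ℝ) + 1 ≤ 3 * (N:ℝ)^((1:ℝ)/3) := by
    constructor
    · positivity
    · linarith
  have hstep : (10*((e:ℝ)+1)) * Real.log ((N:ℝ)+1) ≤
      (30*(N:ℝ)^((1:ℝ)/3)) * (Real.log 2 + (N:ℝ)^ε/ε) := by
    apply mul_le_mul (by linarith [he3.2]) hlogN1 hlogN1pos (by positivity)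
  have hstep2 : (30*(N:ℝ)^((1:ℝ)/3)) * (Real.log 2 + (N:ℝ)^ε/ε) ≤
      (30*(N:ℝ)^((1:ℝ)/3)) * ((N:ℝ)^ε * (Real.log 2 + 1/ε)) := by
    apply mul_le_mul_of_nonneg_left _ (by positivity)
    have h1 : Real.log 2 ≤ (N:ℝ)^ε * Real.log 2 := le_mul_of_one_le_left hlog2.le hre
    have h2 : (N:ℝ)^ε/ε = (N:ℝ)^ε * (1/ε) := by ring
    have h3 : (N:ℝ)^ε * (Real.log 2 + 1/ε) = (N:ℝ)^ε * Real.log 2 + (N:ℝ)^ε * (1/ε) := by ring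
    rw [h3, h2]
    linarith
  have hfin : (x:ℝ) * Real.log 2 ≤
      (30*(1+1/(ε*Real.log 2)) * (N:ℝ)^((1:ℝ)/3+ε)) * Real.log 2 := by
    have heq : (30*(1+1/(ε*Real.log 2)) * (N:ℝ)^((1:ℝ)/3+ε)) * Real.log 2
        = (30*(N:ℝ)^((1:ℝ)/3)) * ((N:ℝ)^ε * (Real.log 2 + 1/ε)) := by
      rw [Real.rpow_add hNpos]
      field_simp
    rw [heq]
    exact hkey.trans (hstep.trans hstep2)
  exact le_of_mul_le_mul_right hfin hlog2

/-- For `A ⊆ [N]` with distinct subset products, one can remove `C·N^{1/3+ε}` elements of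
`A` to obtain `A' ⊆ A` on which the tuple of valuations at primes in `(N^{1/3}, N]` is
injective, and such that every element of `A'` is divisible by some prime in
`(N^{1/3}, N]`. -/
theorem stmt8 : ∀ ε : ℝ, 0 < ε → ∃ C : ℝ, 0 < C ∧ ∀ N : ℕ, ∀ A : Finset ℕ,
    ↑A ⊆ Set.Icc 1 N → DistinctSubsetProds ↑A →
    ∃ A' : Finset ℕ, A' ⊆ A ∧ ((A \ A').card : ℝ) ≤ C * (N : ℝ) ^ ((1 : ℝ) / 3 + ε) ∧
      (∀ a ∈ A', ∀ b ∈ A', (∀ p : ℕ, p.Prime → (N : ℝ) ^ ((1 : ℝ) / 3) < (p : ℝ) → p ≤ N →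
        padicValNat p a = padicValNat p b) → a = b) ∧
      ∀ a ∈ A', ∃ p : ℕ, p.Prime ∧ (N : ℝ) ^ ((1 : ℝ) / 3) < (p : ℝ) ∧ p ≤ N ∧ p ∣ a := by
  intro ε hε
  have hlog2 : (0:ℝ) < Real.log 2 := Real.log_pos (by norm_num)
  refine ⟨60*(1+1/(ε*Real.log 2)), by positivity, ?_⟩
  intro N A hA hD
  classical
  rcases Nat.eq_zero_or_pos N with hN0 | hN
  · subst hN0
    have hAe : A = ∅ := by
      rw [Finset.eq_empty_iff_forall_notMem]
      intro a ha
      have h := hA (Finset.mem_coe.2 ha)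
      rw [Set.mem_Icc] at h
      omega
    refine ⟨∅, by simp, ?_, by simp, by simp⟩
    rw [hAe]
    simp only [Finset.sdiff_empty, Finset.card_empty, Nat.cast_zero, Nat.cast_ofNat]
    positivity
  · set X₀ := A.filter (fun a => vecN N a = 0) with hX0
    set X₁ := A.filter (fun a => 2 ≤ (A.filter (fun b => vecN N b = vecN N a)).card) with hX1
    have hmem : ∀ a ∈ A, 1 ≤ a ∧ a ≤ N := by
      intro a ha
      exact Set.mem_Icc.1 (hA (Finset.mem_coe.2 ha))
    refine ⟨A \ (X₀ ∪ X₁), sdiff_subset, ?_, ?_, ?_⟩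
    · have hsub : X₀ ∪ X₁ ⊆ A := union_subset (filter_subset _ _) (filter_subset _ _)
      have hsd : A \ (A \ (X₀ ∪ X₁)) = X₀ ∪ X₁ := by
        rw [sdiff_sdiff_right_self]
        exact inf_eq_right.2 hsub
      rw [hsd]
      have hb0 := numeric hε N X₀.card (smallP N).card hN (smallP_card N)
        (smoothBound N hN A hA hD)
      have hb1 := numeric hε N X₁.card (smallP N).card hN (smallP_card N)
        (dupBound N hN A hA hD)
      have hcard : ((X₀ ∪ X₁).card : ℝ) ≤ (X₀.card : ℝ) + X₁.card := by
        exact_mod_cast card_union_le _ _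
      calc ((X₀ ∪ X₁).card : ℝ) ≤ (X₀.card : ℝ) + X₁.card := hcard
      _ ≤ 30*(1+1/(ε*Real.log 2)) * (N:ℝ)^((1:ℝ)/3+ε)
          + 30*(1+1/(ε*Real.log 2)) * (N:ℝ)^((1:ℝ)/3+ε) := add_le_add hb0 hb1
      _ = 60*(1+1/(ε*Real.log 2)) * (N:ℝ)^((1:ℝ)/3+ε) := by ring
    · intro a ha b hb hpv
      rw [mem_sdiff] at ha hb
      obtain ⟨haA, haN⟩ := ha
      obtain ⟨hbA, _⟩ := hb
      have haX1 : a ∉ X₁ := fun h => haN (mem_union_right _ h)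
      have hvec : vecN N a = vecN N b := by
        funext p
        by_cases hc : Nat.Prime p ∧ (N : ℝ) ^ ((1:ℝ)/3) < (p : ℝ)
        · obtain ⟨hp, hlt⟩ := hc
          simp only [vecN]
          rw [if_pos (⟨hp, hlt⟩ : Nat.Prime p ∧ (N : ℝ) ^ ((1:ℝ)/3) < (p : ℝ)),
              if_pos (⟨hp, hlt⟩ : Nat.Prime p ∧ (N : ℝ) ^ ((1:ℝ)/3) < (p : ℝ))]
          by_cases hpN : p ≤ N
          · rw [Nat.factorization_def _ hp, Nat.factorization_def _ hp]
            exact hpv p hp hlt hpN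
          · have haa : a < p := by have := (hmem a haA).2; omega
            have hbb : b < p := by have := (hmem b hbA).2; omega
            rw [Nat.factorization_eq_zero_of_lt haa, Nat.factorization_eq_zero_of_lt hbb]
        · simp only [vecN]
          rw [if_neg hc, if_neg hc]
      have h1 : (A.filter (fun c => vecN N c = vecN N a)).card ≤ 1 := by
        by_contra hcon
        push_neg at hcon
        exact haX1 (mem_filter.2 ⟨haA, hcon⟩)
      have hma : a ∈ A.filter (fun c => vecN N c = vecN N a) := mem_filter.2 ⟨haA, rfl⟩
      have hmb : b ∈ A.filter (fun c => vecN N c = vecN N a) := mem_filter.2 ⟨hbA, hvec.symm⟩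
      exact Finset.card_le_one.1 h1 a hma b hmb
    · intro a ha
      rw [mem_sdiff] at ha
      obtain ⟨haA, haN⟩ := ha
      have haX0 : a ∉ X₀ := fun h => haN (mem_union_left _ h)
      have hvne : vecN N a ≠ 0 := fun h => haX0 (mem_filter.2 ⟨haA, h⟩)
      obtain ⟨p, hp⟩ := Function.ne_iff.1 hvne
      by_cases hc : Nat.Prime p ∧ (N : ℝ) ^ ((1:ℝ)/3) < (p : ℝ)
      · obtain ⟨hpp, hlt⟩ := hc
        have hfac : a.factorization p ≠ 0 := by
          intro h0
          apply hp
          simp only [vecN]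
          rw [if_pos (⟨hpp, hlt⟩ : Nat.Prime p ∧ (N : ℝ) ^ ((1:ℝ)/3) < (p : ℝ)), h0]
          rfl
        have hdvd : p ∣ a := Nat.dvd_of_factorization_pos hfac
        have hpa : p ≤ a := Nat.le_of_dvd (by have := (hmem a haA).1; omega) hdvd
        exact ⟨p, hpp, hlt, hpa.trans (hmem a haA).2, hdvd⟩
      · exfalso
        apply hp
        simp only [vecN]
        rw [if_neg hc]
        rfl
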